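/- Let d be a positive odd integer divisible by 3, and let a and b be fixed integers with a ≡ 1 (mod 12) and b = 2^d * a - 3. Then the Diophantine equation a*x^d - y^2 - z^2 + x*y*z - b = 0 has no solution in integers x, y, z. -/

import Mathlib

open Finset

/-- Key Jacobi-symbol lemma: if `n` is odd, not divisible by 3, and divides `v² - 3`,
then `n ≡ ±1 (mod 12)`. -/
lemma fruit_jacobi_aux (n : ℕ) (h2 : n % 2 = 1) (h3 : ¬ (3 ∣ n)) (v : ℤ)
    (hdvd : (n : ℤ) ∣ v ^ 2 - 3) : n % 12 = 1 ∨ n % 12 = 11 := by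
  by_contra hcon
  push_neg at hcon
  have h12 : n % 12 = 5 ∨ n % 12 = 7 := by omega
  have hodd : Odd n := Nat.odd_iff.mpr h2
  -- J(3 | n) = -1 from n % 12 ∈ {5, 7}
  have hJneg : jacobiSym 3 n = -1 := by
    have hmr := jacobiSym.mod_right 3 hodd
    norm_num at hmr
    have h5 : ¬ IsSquare ((3:ℤ) : ZMod 5) := by decide
    have h7 : ¬ IsSquare ((3:ℤ) : ZMod 7) := by decide
    haveI : Fact (Nat.Prime 5) := ⟨by norm_num⟩
    haveI : Fact (Nat.Prime 7) := ⟨by norm_num⟩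
    rcases h12 with h | h
    · rw [hmr, h]
      exact ZMod.nonsquare_iff_jacobiSym_eq_neg_one.mpr h5
    · rw [hmr, h]
      exact ZMod.nonsquare_iff_jacobiSym_eq_neg_one.mpr h7
  --但 J(3 | n) = J(v² | n) = 1
  have hg : v.gcd n = 1 := by
    have h1 : (↑(v.gcd n) : ℤ) ∣ v := Int.gcd_dvd_left v n
    have hn : (↑(v.gcd n) : ℤ) ∣ (n : ℤ) := Int.gcd_dvd_right v n
    have hvsq : (↑(v.gcd n) : ℤ) ∣ v ^ 2 := dvd_pow h1 two_ne_zero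
    have h3' : (↑(v.gcd n) : ℤ) ∣ 3 := by
      have := hn.trans hdvd
      have := dvd_sub hvsq this
      simpa using this
    have h3'' : v.gcd n ∣ 3 := by exact_mod_cast h3'
    rcases (Nat.dvd_prime Nat.prime_three).mp h3'' with h | h
    · exact h
    · exfalso
      apply h3
      have : (↑(v.gcd n) : ℤ) ∣ (n : ℤ) := Int.gcd_dvd_right v n
      rw [h] at this
      exact_mod_cast this
  have hJ1 : jacobiSym 3 n = 1 := by
    have hmod : (3 : ℤ) % (n : ℤ) = v ^ 2 % (n : ℤ) := Int.modEq_iff_dvd.mpr hdvd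
    have := jacobiSym.mod_left' hmod
    rw [this, jacobiSym.sq_one' hg]
  omega

lemma fruit_zmod_of_emod {n : ℕ} {x y : ℤ} (h : x % (n : ℤ) = y % (n : ℤ)) :
    (x : ZMod n) = (y : ZMod n) :=
  (ZMod.intCast_eq_intCast_iff _ _ _).mpr h

lemma fruit_emod_of_zmod {n : ℕ} {x y : ℤ} (h : (x : ZMod n) = (y : ZMod n)) :
    x % (n : ℤ) = y % (n : ℤ) :=
  (ZMod.intCast_eq_intCast_iff _ _ _).mp h

lemma fruit_zmod4_pow (d : ℕ) (hodd : Odd d) (hd3 : 3 ≤ d) (X : ZMod 4) :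
    X ^ d = X ^ 3 := by
  obtain ⟨m, rfl⟩ := hodd
  have hm : 1 ≤ m := by omega
  clear hd3
  induction m, hm using Nat.le_induction with
  | base => rfl
  | succ n hn ih =>
    have h : 2 * (n + 1) + 1 = (2 * n + 1) + 2 := by ring
    rw [h, pow_add, ih]
    have h5 : ∀ Y : ZMod 4, Y ^ 3 * Y ^ 2 = Y ^ 3 := by decide
    exact h5 X

lemma fruit_zmod3_pow (d : ℕ) (hodd : Odd d) (X : ZMod 3) :
    X ^ d = X := by
  obtain ⟨m, rfl⟩ := hodd
  induction m with
  | zero => exact pow_one X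
  | succ n ih =>
    have h : 2 * (n + 1) + 1 = (2 * n + 1) + 2 := by ring
    rw [h, pow_add, ih]
    have h5 : ∀ Y : ZMod 3, Y * Y ^ 2 = Y := by decide
    exact h5 X

/-- Let `d` be a positive odd integer divisible by `3`, and `a`, `b` integers
with `a ≡ 1 (mod 12)` and `b = 2^d * a - 3`. Then
`a*x^d - y² - z² + x*y*z - b = 0` has no integer solution. -/
theorem no_solution_generalized_fruit (d : ℕ) (hd : 0 < d) (hodd : Odd d)
    (h3 : 3 ∣ d) (a b : ℤ) (ha : a % 12 = 1) (hb : b = 2 ^ d * a - 3) :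
    ¬ ∃ x y z : ℤ, a * x ^ d - y ^ 2 - z ^ 2 + x * y * z - b = 0 := by
  rintro ⟨x, y, z, heq⟩
  subst hb
  have hd3 : 3 ≤ d := by obtain ⟨k, rfl⟩ := h3; omega
  have ha4 : ((a : ℤ) : ZMod 4) = 1 := by
    have := fruit_zmod_of_emod (n := 4) (x := a) (y := 1) (by omega)
    push_cast at this
    exact this
  have ha3 : ((a : ℤ) : ZMod 3) = 1 := by
    have := fruit_zmod_of_emod (n := 3) (x := a) (y := 1) (by omega)
    push_cast at this
    exact this
  -- Step 1 : mod 4 analysis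
  have key4 : ∀ X Y Z : ZMod 4, X ^ 3 - Y ^ 2 - Z ^ 2 + X * Y * Z + 3 = 0 →
      X = 1 ∧ (Y = 0 ∨ Y = 2) ∧ (Z = 0 ∨ Z = 2) := by decide
  have h2d4 : (2 : ZMod 4) ^ d = 0 := by
    rw [fruit_zmod4_pow d hodd hd3]; decide
  have h4 := congrArg (fun t : ℤ => (t : ZMod 4)) heq
  push_cast at h4
  rw [fruit_zmod4_pow d hodd hd3 ((x : ZMod 4)), h2d4, ha4] at h4
  obtain ⟨hX4, hY4, hZ4⟩ := key4 (x : ZMod 4) (y : ZMod 4) (z : ZMod 4)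
    (by linear_combination h4)
  have hx4 : x % 4 = 1 := by
    have := fruit_emod_of_zmod (n := 4) (x := x) (y := 1) (by exact_mod_cast hX4)
    omega
  have hy2 : y % 2 = 0 := by
    rcases hY4 with h | h
    · have := fruit_emod_of_zmod (n := 4) (x := y) (y := 0) (by exact_mod_cast h)
      omega
    · have := fruit_emod_of_zmod (n := 4) (x := y) (y := 2) (by exact_mod_cast h)
      omega
  have hz2 : z % 2 = 0 := by
    rcases hZ4 with h | h
    · have := fruit_emod_of_zmod (n := 4) (x := z) (y := 0) (by exact_mod_cast h)
      omega
    · have := fruit_emod_of_zmod (n := 4) (x := z) (y := 2) (by exact_mod_cast h)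
      omega
  -- Step 2 : mod 3 analysis
  have key3 : ∀ X Y Z : ZMod 3, X - Y ^ 2 - Z ^ 2 + X * Y * Z - 2 = 0 →
      X = 0 ∨ X = 2 := by decide
  have h33 := congrArg (fun t : ℤ => (t : ZMod 3)) heq
  push_cast at h33
  rw [fruit_zmod3_pow d hodd ((x : ZMod 3)), fruit_zmod3_pow d hodd (2 : ZMod 3),
    ha3, show (3 : ZMod 3) = 0 by decide] at h33
  have hx3 : x % 3 = 0 ∨ x % 3 = 2 := by
    rcases key3 (x : ZMod 3) (y : ZMod 3) (z : ZMod 3) (by linear_combination h33) with h | h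
    · have := fruit_emod_of_zmod (n := 3) (x := x) (y := 0) (by exact_mod_cast h)
      omega
    · have := fruit_emod_of_zmod (n := 3) (x := x) (y := 2) (by exact_mod_cast h)
      omega
  have hx12 : x % 12 = 9 ∨ x % 12 = 5 := by omega
  -- setup : z = 2 * z1, geometric sum S, main identity
  obtain ⟨z1, rfl⟩ : ∃ z1, z = 2 * z1 := ⟨z / 2, by omega⟩
  set S : ℤ := ∑ i ∈ Finset.range d, x ^ i * 2 ^ (d - 1 - i) with hSdef
  have hS : S * (x - 2) = x ^ d - 2 ^ d := by
    rw [hSdef]; exact geom_sum₂_mul x 2 d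
  have hU : (y - x * z1) ^ 2 - 3 = (x - 2) * ((x + 2) * z1 ^ 2 + a * S) := by
    linear_combination (-1 : ℤ) * heq - a * hS
  rcases hx12 with hx9 | hx5
  · -- Case A : x ≡ 9 (mod 12)
    have hdvd : ((x - 2).natAbs : ℤ) ∣ (y - x * z1) ^ 2 - 3 := by
      rw [Int.natAbs_dvd]
      exact ⟨_, hU⟩
    have := fruit_jacobi_aux (x - 2).natAbs (by omega) (by omega) _ hdvd
    omega
  · -- Case B : x ≡ 5 (mod 12)
    have h3x : (3 : ℤ) ∣ x - 2 := by omega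
    obtain ⟨m, hm⟩ := h3x
    have h3u : (3 : ℤ) ∣ (y - x * z1) := by
      apply (by norm_num : Prime (3 : ℤ)).dvd_of_dvd_pow (n := 2)
      rw [show (y - x * z1) ^ 2 = (x - 2) * ((x + 2) * z1 ^ 2 + a * S) + 3 by
        linear_combination hU]
      exact dvd_add (Dvd.dvd.mul_right (by omega) _) (by norm_num)
    obtain ⟨t, ht⟩ := h3u
    have key : 3 * t ^ 2 - 1 = m * ((x + 2) * z1 ^ 2 + a * S) := by
      have h9 : (3 : ℤ) * (3 * t ^ 2 - 1) = 3 * (m * ((x + 2) * z1 ^ 2 + a * S)) := by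
        linear_combination hU - (y - x * z1 + 3 * t) * ht +
          ((x + 2) * z1 ^ 2 + a * S) * hm
      exact mul_left_cancel₀ (by norm_num) h9
    have hmdvd : ((m.natAbs : ℤ)) ∣ (3 * t) ^ 2 - 3 := by
      rw [Int.natAbs_dvd]
      exact ⟨3 * ((x + 2) * z1 ^ 2 + a * S), by linear_combination 3 * key⟩
    have h3m : ¬ (3 ∣ m.natAbs) := by
      intro h
      have h1 : (3 : ℤ) ∣ m := Int.natAbs_dvd_natAbs.mp h
      have h2 : (3 : ℤ) ∣ 3 * t ^ 2 - 1 := by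
        rw [key]; exact h1.mul_right _
      have h3' : (3 : ℤ) ∣ 3 * t ^ 2 := ⟨t ^ 2, by ring⟩
      have : (3 : ℤ) ∣ 1 := by
        have := dvd_sub h3' h2
        simpa using this
      norm_num at this
    have hj := fruit_jacobi_aux m.natAbs (by omega) h3m (3 * t) hmdvd
    have hm3 : m % 3 = 1 := by omega
    -- final contradiction mod 3
    have hx3c : ((x : ℤ) : ZMod 3) = 2 := by
      have := fruit_zmod_of_emod (n := 3) (x := x) (y := 2) (by omega)
      push_cast at this
      exact this
    have hm3c : ((m : ℤ) : ZMod 3) = 1 := by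
      have := fruit_zmod_of_emod (n := 3) (x := m) (y := 1) (by omega)
      push_cast at this
      exact this
    have hS3 : ((S : ℤ) : ZMod 3) = 0 := by
      rw [hSdef]
      push_cast
      have hterm : ∀ i ∈ Finset.range d,
          ((x : ℤ) : ZMod 3) ^ i * (2 : ZMod 3) ^ (d - 1 - i) = (2 : ZMod 3) ^ (d - 1) := by
        intro i hi
        rw [hx3c, ← pow_add]
        congr 1
        have := Finset.mem_range.mp hi
        omega
      rw [Finset.sum_congr rfl hterm, Finset.sum_const, Finset.card_range, nsmul_eq_mul,
        (ZMod.natCast_eq_zero_iff d 3).mpr h3, zero_mul]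
    have hc := congrArg (fun t : ℤ => (t : ZMod 3)) key
    push_cast at hc
    rw [hx3c, hm3c, ha3, hS3, show (3 : ZMod 3) = 0 by decide] at hc
    have hfin : (4 : ZMod 3) * ((z1 : ℤ) : ZMod 3) ^ 2 = -1 := by linear_combination -hc
    rw [show (4 : ZMod 3) = 1 by decide, one_mul] at hfin
    have : ∀ c : ZMod 3, c ^ 2 ≠ -1 := by decide
    exact this _ hfin
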